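/- If Success : ℝ≥0 → [0,1] is monotonically nonincreasing with Success(c) = 1 for c ≤ c₀ and Success(2^n c₀) ≥ η^n for all n ≥ 0 with η ≥ 1/2, then ∫_{0}^{∞} Success(c) dc = ∞. -/

import Mathlib

open MeasureTheory
open scoped ENNReal

/-- If `Success` is a nonincreasing function into `[0,1]`,
equal to `1` up to `c₀` and with `Success (2^n c₀) ≥ η^n` for `η ≥ 1/2`,
then its integral over `[0, ∞)` is infinite. -/
theorem integral_success_infinite
    (Success : ℝ → ℝ) (c₀ η : ℝ)
    (hc₀ : 0 < c₀) (hη₁ : 1 / 2 ≤ η) (hη₂ : η ≤ 1)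
    (hbounds : ∀ c, 0 ≤ Success c ∧ Success c ≤ 1)
    (hanti : Antitone Success)
    (hbase : ∀ c ≤ c₀, Success c = 1)
    (hdecay : ∀ n : ℕ, η ^ n ≤ Success (2 ^ n * c₀)) :
    ∫⁻ c in Set.Ioi (0 : ℝ), ENNReal.ofReal (Success c) = ∞ := by
  set f : ℝ → ℝ≥0∞ := fun c => ENNReal.ofReal (Success c) with hfdef
  have hηpos : (0:ℝ) < η := by linarith
  -- key: integral over Ioc 0 (2^N c₀) is at least N * (c₀/2)
  have key : ∀ N : ℕ, (N : ℝ≥0∞) * ENNReal.ofReal (c₀ / 2)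
      ≤ ∫⁻ c in Set.Ioc 0 ((2:ℝ) ^ N * c₀), f c := by
    intro N
    induction N with
    | zero => simp
    | succ N ih =>
      have hle : (2:ℝ) ^ N * c₀ ≤ 2 ^ (N+1) * c₀ := by
        have : (2:ℝ) ^ N ≤ 2 ^ (N+1) := by
          apply pow_le_pow_right₀ (by norm_num) (by omega)
        nlinarith
      have hpos : (0:ℝ) < (2:ℝ) ^ N * c₀ := by positivity
      have hsplit : Set.Ioc (0:ℝ) ((2:ℝ) ^ (N+1) * c₀)
          = Set.Ioc (0:ℝ) ((2:ℝ) ^ N * c₀) ∪ Set.Ioc ((2:ℝ) ^ N * c₀) ((2:ℝ) ^ (N+1) * c₀) :=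
        (Set.Ioc_union_Ioc_eq_Ioc hpos.le hle).symm
      rw [hsplit, lintegral_union measurableSet_Ioc (Set.Ioc_disjoint_Ioc_of_le le_rfl)]
      -- bound the new block from below
      have hblock : ENNReal.ofReal (c₀ / 2)
          ≤ ∫⁻ c in Set.Ioc ((2:ℝ) ^ N * c₀) ((2:ℝ) ^ (N+1) * c₀), f c := by
        have hlb : ∀ c ∈ Set.Ioc ((2:ℝ) ^ N * c₀) ((2:ℝ) ^ (N+1) * c₀),
            ENNReal.ofReal (η ^ (N+1)) ≤ f c := by
          intro c hc
          apply ENNReal.ofReal_le_ofReal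
          calc η ^ (N+1) ≤ Success (2 ^ (N+1) * c₀) := hdecay (N+1)
            _ ≤ Success c := hanti hc.2
        calc ENNReal.ofReal (c₀ / 2)
            ≤ ENNReal.ofReal (η ^ (N+1)) * volume (Set.Ioc ((2:ℝ) ^ N * c₀) ((2:ℝ) ^ (N+1) * c₀)) := by
              rw [Real.volume_Ioc, ← ENNReal.ofReal_mul (by positivity)]
              apply ENNReal.ofReal_le_ofReal
              have h2η : (1:ℝ) ≤ (2*η) ^ N := one_le_pow₀ (by linarith)
              have hlen : (2:ℝ) ^ (N+1) * c₀ - 2 ^ N * c₀ = 2 ^ N * c₀ := by ring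
              rw [hlen]
              have : η ^ (N+1) * (2 ^ N * c₀) = η * ((2*η)^N * c₀) := by
                rw [mul_pow]; ring
              rw [this]
              have h1 : (1/2:ℝ) * c₀ ≤ η * ((2*η)^N * c₀) :=
                mul_le_mul hη₁ (le_mul_of_one_le_left hc₀.le h2η) hc₀.le hηpos.le
              linarith
          _ ≤ ∫⁻ c in Set.Ioc ((2:ℝ) ^ N * c₀) ((2:ℝ) ^ (N+1) * c₀), f c := by
              rw [← setLIntegral_const]
              exact setLIntegral_mono' measurableSet_Ioc hlb
      push_cast
      rw [add_mul, one_mul]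
      exact add_le_add ih hblock
  have hsub : ∀ N : ℕ, Set.Ioc (0:ℝ) ((2:ℝ) ^ N * c₀) ⊆ Set.Ioi (0:ℝ) :=
    fun N => Set.Ioc_subset_Ioi_self
  have key2 : ∀ N : ℕ, (N : ℝ≥0∞) * ENNReal.ofReal (c₀ / 2)
      ≤ ∫⁻ c in Set.Ioi (0:ℝ), f c := fun N =>
    le_trans (key N) (lintegral_mono_set (hsub N))
  apply ENNReal.eq_top_of_forall_nnreal_le
  intro r
  obtain ⟨N, hN⟩ := exists_nat_ge ((r : ℝ) / (c₀ / 2))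
  have hr : (r : ℝ) ≤ (N : ℝ) * (c₀ / 2) := by
    rw [div_le_iff₀ (by linarith)] at hN; linarith
  calc (r : ℝ≥0∞) = ENNReal.ofReal (r : ℝ) := ENNReal.ofReal_coe_nnreal.symm
    _ ≤ ENNReal.ofReal ((N : ℝ) * (c₀ / 2)) := ENNReal.ofReal_le_ofReal hr
    _ = (N : ℝ≥0∞) * ENNReal.ofReal (c₀ / 2) := by
        rw [ENNReal.ofReal_mul (by positivity), ENNReal.ofReal_natCast]
    _ ≤ _ := key2 N
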